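/- For every φ > 0 and all reals n_A ≥ 0, n_B ≥ 0, letting L̂ = (n_A + n_B)/2, the product L ↦ M(n_A,L;φ) · M(n_B,L;φ) on [0,∞) attains its minimum at L = L̂; that is, M(n_A,L̂;φ) · M(n_B,L̂;φ) ≤ M(n_A,L;φ) · M(n_B,L;φ) for all L ≥ 0. -/

import Mathlib

/-- `M(n, L; φ) = φ^φ (φ+L)^{-(φ+n)} (Γ(φ+n)/Γ(φ)) e^L`. -/
noncomputable def M (n L φ : ℝ) : ℝ :=
  φ ^ φ * (φ + L) ^ (-(φ + n)) * (Real.Gamma (φ + n) / Real.Gamma φ) * Real.exp L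

lemma key_min (a x : ℝ) (ha : 0 < a) (hx : 0 < x) :
    (a / 2) ^ (-a) * Real.exp a ≤ x ^ (-a) * Real.exp (2 * x) := by
  have hh : 0 < a / 2 := by linarith
  have ht : 0 < x / (a / 2) := div_pos hx hh
  have h1 : x / (a / 2) ≤ Real.exp (x / (a / 2) - 1) := by
    have := Real.add_one_le_exp (x / (a / 2) - 1)
    linarith
  have h2 : (x / (a / 2)) ^ a ≤ Real.exp (x / (a / 2) - 1) ^ a :=
    Real.rpow_le_rpow ht.le h1 ha.le
  rw [← Real.exp_mul] at h2
  have harith : (x / (a / 2) - 1) * a = 2 * x - a := by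
    field_simp
  rw [harith, Real.div_rpow hx.le hh.le] at h2
  have hxa : 0 < x ^ a := Real.rpow_pos_of_pos hx a
  have hha : 0 < (a / 2) ^ a := Real.rpow_pos_of_pos hh a
  rw [Real.rpow_neg hh.le, Real.rpow_neg hx.le]
  rw [div_le_iff₀ hha] at h2
  rw [Real.exp_sub] at h2
  have hea : 0 < Real.exp a := Real.exp_pos a
  have hmain : Real.exp a * x ^ a ≤ (a/2)^a * Real.exp (2*x) := by
    calc Real.exp a * x ^ a ≤ Real.exp a * (Real.exp (2*x)/Real.exp a * (a/2)^a) :=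
          mul_le_mul_of_nonneg_left h2 hea.le
      _ = (a/2)^a * Real.exp (2*x) := by field_simp
  rw [le_inv_mul_iff₀ hxa,
    show x ^ a * (((a/2)^a)⁻¹ * Real.exp a) = Real.exp a * x ^ a / (a/2)^a by ring,
    div_le_iff₀ hha]
  linarith [hmain]

/-- For every `φ > 0` and `n_A, n_B ≥ 0`, the product `L ↦ M(n_A,L;φ)·M(n_B,L;φ)` on `[0,∞)`
attains its minimum at the pooled estimate `L̂ = (n_A + n_B)/2`. -/
theorem M_product_min_at_pooled (φ nA nB : ℝ) (hφ : 0 < φ) (hA : 0 ≤ nA) (hB : 0 ≤ nB) :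
    ∀ L : ℝ, 0 ≤ L →
      M nA ((nA + nB) / 2) φ * M nB ((nA + nB) / 2) φ ≤ M nA L φ * M nB L φ := by
  intro L hL
  set a : ℝ := 2 * φ + nA + nB with ha_def
  have ha : 0 < a := by positivity
  set K : ℝ := φ ^ φ * φ ^ φ * (Real.Gamma (φ + nA) / Real.Gamma φ) *
      (Real.Gamma (φ + nB) / Real.Gamma φ) * Real.exp (-(2 * φ)) with hK_def
  have hK : 0 ≤ K := by
    have h1 : 0 < Real.Gamma φ := Real.Gamma_pos_of_pos hφ
    have h2 : 0 < Real.Gamma (φ + nA) := Real.Gamma_pos_of_pos (by linarith)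
    have h3 : 0 < Real.Gamma (φ + nB) := Real.Gamma_pos_of_pos (by linarith)
    positivity
  have expand : ∀ L' : ℝ, 0 ≤ L' →
      M nA L' φ * M nB L' φ = K * ((φ + L') ^ (-a) * Real.exp (2 * (φ + L'))) := by
    intro L' hL'
    have hx : 0 < φ + L' := by linarith
    have hr : (φ + L') ^ (-(φ + nA)) * (φ + L') ^ (-(φ + nB)) = (φ + L') ^ (-a) := by
      rw [← Real.rpow_add hx, ha_def]; ring_nf
    have he : Real.exp L' * Real.exp L' = Real.exp (-(2 * φ)) * Real.exp (2 * (φ + L')) := by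
      rw [← Real.exp_add, ← Real.exp_add]; ring_nf
    unfold M
    rw [hK_def]
    calc φ ^ φ * (φ + L') ^ (-(φ + nA)) * (Real.Gamma (φ + nA) / Real.Gamma φ) * Real.exp L' *
        (φ ^ φ * (φ + L') ^ (-(φ + nB)) * (Real.Gamma (φ + nB) / Real.Gamma φ) * Real.exp L')
        = (φ ^ φ * φ ^ φ * (Real.Gamma (φ + nA) / Real.Gamma φ) *
            (Real.Gamma (φ + nB) / Real.Gamma φ)) *
          ((φ + L') ^ (-(φ + nA)) * (φ + L') ^ (-(φ + nB))) *
          (Real.exp L' * Real.exp L') := by ring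
      _ = _ := by rw [hr, he]; ring
  have hhat : (0:ℝ) ≤ (nA + nB) / 2 := by linarith
  rw [expand _ hhat, expand _ hL]
  apply mul_le_mul_of_nonneg_left _ hK
  have hphalf : φ + (nA + nB) / 2 = a / 2 := by rw [ha_def]; ring
  rw [hphalf]
  have h2a : 2 * (a / 2) = a := by ring
  rw [h2a]
  exact key_min a (φ + L) ha (by linarith)
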